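/- Let f : (0,∞) → ℝ be given by f(x) = ln(1+x)/x. Then for every integer n ≥ 1 and all pairwise distinct x_1, …, x_n ∈ (0,∞), one has 0 < Σ_{i=1}^n f(x_i) / Π_{j≠i} (x_j − x_i) < 1/n. -/

import Mathlib

open Finset


lemma lemA (x : ℝ) (hx : 0 < x) :
    ∫ t in (0:ℝ)..1, (1 + t * x)⁻¹ = Real.log (1 + x) / x := by
  have hpos : ∀ t ∈ Set.uIcc (0:ℝ) 1, 0 < 1 + t * x := by
    intro t ht
    rw [Set.uIcc_of_le zero_le_one] at ht
    nlinarith [ht.1]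
  have hderiv : ∀ t ∈ Set.uIcc (0:ℝ) 1,
      HasDerivAt (fun s => Real.log (1 + s * x) / x) ((1 + t * x)⁻¹) t := by
    intro t ht
    have h1 : HasDerivAt (fun s : ℝ => 1 + s * x) x t := by
      simpa using ((hasDerivAt_id t).mul_const x).const_add 1
    have h2 := (h1.log (hpos t ht).ne').div_const x
    refine h2.congr_deriv ?_
    rw [div_div, mul_comm (1+t*x) x, ← div_div, div_self hx.ne', one_div]
  have hcont : ContinuousOn (fun t : ℝ => (1 + t * x)⁻¹) (Set.uIcc 0 1) := by
    exact (continuousOn_const.add (continuousOn_id.mul continuousOn_const)).inv₀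
      fun t ht => (hpos t ht).ne'
  rw [intervalIntegral.integral_eq_sub_of_hasDerivAt hderiv
    (hcont.intervalIntegrable)]
  simp

lemma lemB {n : ℕ} (hn : 1 ≤ n) (x : Fin n → ℝ) (hinj : Function.Injective x)
    (hx : ∀ i, 0 < x i) (t : ℝ) (ht : 0 < t) :
    ∑ i, (1 + t * x i)⁻¹ / ∏ j ∈ Finset.univ.erase i, (x j - x i)
      = t ^ (n - 1) / ∏ i, (1 + t * x i) := by
  haveI : Nonempty (Fin n) := Fin.pos_iff_nonempty.mp (by omega)
  have hP : ∀ i, (0:ℝ) < 1 + t * x i := fun i => by nlinarith [hx i, ht]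
  have hsum := Lagrange.sum_basis (Set.injOn_of_injective hinj) (univ_nonempty (α := Fin n))
  have hev := congrArg (Polynomial.eval (-t⁻¹)) hsum
  simp only [Polynomial.eval_finset_sum, Lagrange.basis, Polynomial.eval_prod,
    Lagrange.basisDivisor, Polynomial.eval_mul, Polynomial.eval_C, Polynomial.eval_sub,
    Polynomial.eval_X, Polynomial.eval_one] at hev
  have hcard : ∀ i : Fin n, (Finset.univ.erase i).card = n - 1 := by
    intro i; rw [card_erase_of_mem (mem_univ i), card_univ, Fintype.card_fin]
  have hD : ∀ i : Fin n, (∏ j ∈ Finset.univ.erase i, (x j - x i)) ≠ 0 := by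
    intro i
    refine Finset.prod_ne_zero_iff.mpr fun j hj => sub_ne_zero.mpr fun h => ?_
    exact (Finset.mem_erase.mp hj).1 (hinj h)
  have hev2 : ∑ i, (∏ j ∈ Finset.univ.erase i, (x j - x i))⁻¹ *
      ((t ^ (n-1))⁻¹ * ∏ j ∈ Finset.univ.erase i, (1 + t * x j)) = 1 := by
    calc ∑ i, (∏ j ∈ Finset.univ.erase i, (x j - x i))⁻¹ *
          ((t ^ (n-1))⁻¹ * ∏ j ∈ Finset.univ.erase i, (1 + t * x j))
        = ∑ i, ∏ j ∈ Finset.univ.erase i, ((x i - x j)⁻¹ * (-t⁻¹ - x j)) := by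
          refine Finset.sum_congr rfl fun i _ => ?_
          rw [← inv_pow, ← Finset.prod_inv_distrib, ← hcard i, ← Finset.prod_const (t⁻¹),
            ← Finset.prod_mul_distrib, ← Finset.prod_mul_distrib]
          refine Finset.prod_congr rfl fun j hj => ?_
          have hij : x i ≠ x j := fun h => (Finset.mem_erase.mp hj).1 (hinj h.symm)
          have hd : x i - x j ≠ 0 := sub_ne_zero.mpr hij
          have hd' : x j - x i ≠ 0 := sub_ne_zero.mpr (Ne.symm hij)
          field_simp
          ring
      _ = 1 := hev
  calc ∑ i, (1 + t * x i)⁻¹ / ∏ j ∈ Finset.univ.erase i, (x j - x i)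
      = ∑ i, ((∏ j ∈ Finset.univ.erase i, (x j - x i))⁻¹ *
          ((t ^ (n-1))⁻¹ * ∏ j ∈ Finset.univ.erase i, (1 + t * x j))) *
          (t ^ (n-1) / ∏ i, (1 + t * x i)) := by
        refine Finset.sum_congr rfl fun i _ => ?_
        have hQ : ∏ j ∈ Finset.univ.erase i, (1 + t * x j) ≠ 0 :=
          Finset.prod_ne_zero_iff.mpr fun j _ => (hP j).ne'
        have hPi : ∏ i, (1 + t * x i) =
            (∏ j ∈ Finset.univ.erase i, (1 + t * x j)) * (1 + t * x i) :=
          (Finset.prod_erase_mul _ _ (mem_univ i)).symm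
        rw [hPi]
        have htp : (t:ℝ) ^ (n-1) ≠ 0 := pow_ne_zero _ ht.ne'
        have ha : (1 + t * x i) ≠ 0 := (hP i).ne'
        set D := ∏ j ∈ Finset.univ.erase i, (x j - x i) with hDdef
        set Q := ∏ j ∈ Finset.univ.erase i, (1 + t * x j) with hQdef
        set s := (t:ℝ) ^ (n-1) with hsdef
        set a := 1 + t * x i with hadef
        rw [div_eq_mul_inv, div_eq_mul_inv, mul_inv]
        rw [show D⁻¹ * (s⁻¹ * Q) * (s * (Q⁻¹ * a⁻¹)) = s⁻¹ * s * (Q * Q⁻¹) * (a⁻¹ * D⁻¹) by ring,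
          inv_mul_cancel₀ htp, mul_inv_cancel₀ hQ, one_mul, one_mul]
      _ = t ^ (n - 1) / ∏ i, (1 + t * x i) := by
        rw [← Finset.sum_mul, hev2, one_mul]

theorem log_div_divided_difference_bounds (f : ℝ → ℝ)
    (hfdef : ∀ x ∈ Set.Ioi (0 : ℝ), f x = Real.log (1 + x) / x)
    (n : ℕ) (hn : 1 ≤ n) (x : Fin n → ℝ) (hx : ∀ i, x i ∈ Set.Ioi (0 : ℝ))
    (hinj : Function.Injective x) :
    0 < ∑ i, f (x i) / ∏ j ∈ Finset.univ.erase i, (x j - x i) ∧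
    ∑ i, f (x i) / ∏ j ∈ Finset.univ.erase i, (x j - x i) < 1 / n := by
  haveI : Nonempty (Fin n) := Fin.pos_iff_nonempty.mp (by omega)
  have hx' : ∀ i, 0 < x i := fun i => hx i
  have hP : ∀ t : ℝ, 0 ≤ t → ∀ i, (0:ℝ) < 1 + t * x i := by
    intro t ht i; nlinarith [hx' i, mul_nonneg ht (hx' i).le]
  -- continuity facts
  have hcont1 : ∀ i : Fin n, ContinuousOn (fun t : ℝ => (1 + t * x i)⁻¹ /
      ∏ j ∈ Finset.univ.erase i, (x j - x i)) (Set.uIcc 0 1) := by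
    intro i
    apply ContinuousOn.div_const
    refine (continuousOn_const.add (continuousOn_id.mul continuousOn_const)).inv₀ ?_
    intro t ht
    rw [Set.uIcc_of_le zero_le_one] at ht
    exact (hP t ht.1 i).ne'
  -- step 1: each term as an integral
  have hterm : ∀ i : Fin n, f (x i) / ∏ j ∈ Finset.univ.erase i, (x j - x i)
      = ∫ t in (0:ℝ)..1, (1 + t * x i)⁻¹ / ∏ j ∈ Finset.univ.erase i, (x j - x i) := by
    intro i
    rw [hfdef _ (hx i), ← lemA (x i) (hx' i), intervalIntegral.integral_div]
  have hsum : ∑ i, f (x i) / ∏ j ∈ Finset.univ.erase i, (x j - x i)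
      = ∫ t in (0:ℝ)..1, ∑ i, (1 + t * x i)⁻¹ / ∏ j ∈ Finset.univ.erase i, (x j - x i) := by
    rw [intervalIntegral.integral_finset_sum]
    · exact Finset.sum_congr rfl fun i _ => hterm i
    · exact fun i _ => (hcont1 i).intervalIntegrable
  have hsum2 : ∑ i, f (x i) / ∏ j ∈ Finset.univ.erase i, (x j - x i)
      = ∫ t in (0:ℝ)..1, t ^ (n-1) / ∏ i, (1 + t * x i) := by
    rw [hsum, intervalIntegral.integral_of_le zero_le_one,
      intervalIntegral.integral_of_le zero_le_one]
    refine MeasureTheory.setIntegral_congr_fun measurableSet_Ioc fun t ht => ?_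
    exact lemB hn x hinj hx' t ht.1
  rw [hsum2]
  have hcontg : ContinuousOn (fun t : ℝ => t ^ (n-1) / ∏ i, (1 + t * x i)) (Set.Icc 0 1) := by
    apply ContinuousOn.div
    · exact (continuous_pow _).continuousOn
    · exact (continuous_finset_prod _ fun i _ =>
        (continuous_const.add (continuous_id.mul continuous_const))).continuousOn
    · intro t ht
      exact (Finset.prod_pos fun i _ => hP t ht.1 i).ne'
  constructor
  · apply intervalIntegral.intervalIntegral_pos_of_pos_on
    · exact (hcontg.mono (by rw [Set.uIcc_of_le zero_le_one])).intervalIntegrable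
    · intro t ht
      exact div_pos (pow_pos ht.1 _) (Finset.prod_pos fun i _ => hP t ht.1.le i)
    · exact zero_lt_one
  · have hub : (∫ t in (0:ℝ)..1, t ^ (n-1) / ∏ i, (1 + t * x i))
        < ∫ t in (0:ℝ)..1, t ^ (n-1) := by
      apply intervalIntegral.integral_lt_integral_of_continuousOn_of_le_of_exists_lt
        zero_lt_one hcontg (continuous_pow _).continuousOn
      · intro t ht
        apply div_le_self (pow_nonneg ht.1.le _)
        calc (1:ℝ) = ∏ _i : Fin n, (1:ℝ) := (Finset.prod_const_one).symm
        _ ≤ ∏ i, (1 + t * x i) := Finset.prod_le_prod (fun i _ => zero_le_one)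
            (fun i _ => by nlinarith [hx' i, ht.1])
      · refine ⟨1, Set.right_mem_Icc.mpr zero_le_one, ?_⟩
        have h1 : (1:ℝ) < ∏ i, (1 + 1 * x i) := by
          calc (1:ℝ) = ∏ _i : Fin n, (1:ℝ) := (Finset.prod_const_one).symm
          _ < ∏ i, (1 + 1 * x i) := Finset.prod_lt_prod_of_nonempty
              (fun i _ => zero_lt_one) (fun i _ => by nlinarith [hx' i]) univ_nonempty
        rw [one_pow]
        rw [div_lt_one (by linarith)]
        exact h1
    have hc : ((n - 1 : ℕ) : ℝ) + 1 = (n : ℝ) := by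
      exact_mod_cast congrArg (Nat.cast : ℕ → ℝ) (Nat.sub_add_cancel hn)
    have hval : (∫ t in (0:ℝ)..1, t ^ (n-1)) = 1 / n := by
      rw [integral_pow, hc, one_pow, zero_pow (Nat.succ_ne_zero _), sub_zero]
    rw [hval] at hub
    exact hub
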